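/- (Lumpability, m strategies) For every cluster index (A, x_1,…,x_m), every full state h ∈ A_{A,x_1,…,x_m}, and every cluster index (A', x'_1,…,x'_m): Σ_{h' ∈ A_{A',x'_1,…,x'_m}} m_{h,h'} = m''_{(A,x_1,…,x_m),(A',x'_1,…,x'_m)}. In particular, the sum of the full-chain transition probabilities from any state of a given cluster into a target cluster depends only on the two clusters and equals the corresponding entry of the reduced transition matrix M''. -/

import Mathlib

open Finset Matrix
open scoped Classical

noncomputable section

/-- A memory-1 strategy: an initial cooperation probability `init` and conditional
cooperation probabilities `cond A j`: the probability to cooperate in the next round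
when one's own action in the current round was `A` (`true` = cooperate) and exactly
`j` co-players cooperated. -/
structure Mem1 where
  init : ℝ
  cond : Bool → ℕ → ℝ

/-- All entries of the strategy lie in `[0,1]`. -/
def Mem1.valid (p : Mem1) : Prop :=
  p.init ∈ Set.Icc (0:ℝ) 1 ∧ ∀ A j, p.cond A j ∈ Set.Icc (0:ℝ) 1

/-- A full state: the action of each of the `n` players (`true` = cooperate). -/
abbrev FullState (n : ℕ) := Fin n → Bool

/-- The number of cooperators `σ(h)` in a full state. -/
def nCoop {n : ℕ} (h : FullState n) : ℕ :=
  (Finset.univ.filter fun i => h i = true).card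

/-- The full transition matrix `M` on the `2^n` full states, given each player's
memory-1 strategy: `m_{h,h'} = ∏ i u_i`, where `u_i` is player `i`'s probability of
choosing action `h' i` given that in state `h` his action was `h i` and
`σ(h) - f(h i)` of his co-players cooperated. -/
def fullM {n : ℕ} (strat : Fin n → Mem1) : Matrix (FullState n) (FullState n) ℝ :=
  Matrix.of fun h h' => ∏ i,
    (if h' i then (strat i).cond (h i) (nCoop h - if h i then 1 else 0)
     else 1 - (strat i).cond (h i) (nCoop h - if h i then 1 else 0))

/-- The initial full-state distribution `v(0)`: each player cooperates independently
with the initial probability of his own strategy, `v(0)_h = ∏ i |1 - f(A_i) - p^i_0|`. -/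
def fullInit {n : ℕ} (strat : Fin n → Mem1) : FullState n → ℝ :=
  fun h => ∏ i, |1 - (if h i then (1:ℝ) else 0) - (strat i).init|

/-- Binomial transfer factor: for a block of `tot` co-players of one strategy of which
`x` cooperated in the last round, the probability that exactly `x'` of them cooperate
in the next round, where previous cooperators cooperate with probability `pc` and
previous defectors with probability `pd`:
`Σ_{j=0}^{x'} C(x,j) pc^j (1-pc)^{x-j} C(tot-x, x'-j) pd^{x'-j} (1-pd)^{(tot-x)-(x'-j)}`. -/
def transfer (pc pd : ℝ) (x tot x' : ℕ) : ℝ :=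
  ∑ j ∈ Finset.range (x' + 1),
    (x.choose j : ℝ) * pc ^ j * (1 - pc) ^ (x - j) *
    ((tot - x).choose (x' - j) : ℝ) * pd ^ (x' - j) * (1 - pd) ^ ((tot - x) - (x' - j))

/-- The discounted mean distribution `(1-δ) Σ_{t=0}^∞ δ^t (w₀ T^t)`. -/
def discMean {α : Type*} [Fintype α] [DecidableEq α]
    (δ : ℝ) (w0 : α → ℝ) (T : Matrix α α ℝ) : α → ℝ :=
  fun j => (1 - δ) * ∑' t : ℕ, δ ^ t * (w0 ᵥ* T ^ t) j

/-- The focal player's one-round payoff in full state `h`: `a_{σ(h)-1}` if he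
cooperates, `b_{σ(h)}` if he defects. -/
def focalPayoff {n : ℕ} (focal : Fin n) (a b : ℕ → ℝ) (h : FullState n) : ℝ :=
  if h focal then a (nCoop h - 1) else b (nCoop h)

/-- Strategy assignment for `m` strategies: player `i` uses strategy `ps (assign i)`. -/
def stratM {n m : ℕ} (ps : Fin m → Mem1) (assign : Fin n → Fin m) : Fin n → Mem1 :=
  fun i => ps (assign i)

/-- The clustered state space for `m` strategies: the focal action together with, for
each strategy index `i`, the number `x i ∈ {0,…,k_i}` of cooperators among the `k_i`
co-players using strategy `i`. -/
abbrev RStateM {m : ℕ} (ks : Fin m → ℕ) := Bool × ((i : Fin m) → Fin (ks i + 1))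

/-- The cluster `A_{A,x_1,…,x_m}`: full states in which the focal player plays `A` and,
for every `i`, exactly `x i` of the co-players using strategy `i` cooperate. -/
def clusterM {n m : ℕ} (focal : Fin n) (assign : Fin n → Fin m) (ks : Fin m → ℕ)
    (A : Bool) (x : (i : Fin m) → Fin (ks i + 1)) : Finset (FullState n) :=
  Finset.univ.filter fun h =>
    h focal = A ∧
    ∀ i, (Finset.univ.filter fun j => j ≠ focal ∧ assign j = i ∧ h j = true).card = (x i : ℕ)

/-- The `m`-strategy reduced transition matrix `M''` on the `2 ∏ (k_i+1)` clustered
states, for a focal player using strategy `ps i0`. -/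
def redMM {m : ℕ} (ps : Fin m → Mem1) (ks : Fin m → ℕ) (i0 : Fin m) :
    Matrix (RStateM ks) (RStateM ks) ℝ :=
  Matrix.of fun s s' =>
    match s, s' with
    | (A, x), (A', x') =>
      |1 - (if A' then (1:ℝ) else 0) - (ps i0).cond A (∑ i, (x i : ℕ))| *
      ∏ i, transfer ((ps i).cond true ((∑ i', (x i' : ℕ)) + (if A then 1 else 0) - 1))
                    ((ps i).cond false ((∑ i', (x i' : ℕ)) + (if A then 1 else 0)))
                    (x i : ℕ) (ks i) (x' i : ℕ)

/-- The initial clustered distribution `ν(0)` for `m` strategies. -/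
def redInitM {m : ℕ} (ps : Fin m → Mem1) (ks : Fin m → ℕ) (i0 : Fin m) :
    RStateM ks → ℝ :=
  fun s => match s with
  | (A, x) =>
    |1 - (if A then (1:ℝ) else 0) - (ps i0).init| *
    ∏ i, (((ks i).choose (x i : ℕ) : ℝ) * (ps i).init ^ (x i : ℕ) *
          (1 - (ps i).init) ^ (ks i - (x i : ℕ)))

lemma bern {α : Type*} [DecidableEq α] (S : Finset α) (p : ℝ) (j : ℕ) :
    ∑ T ∈ S.powersetCard j, ∏ a ∈ S, (if a ∈ T then p else 1 - p)
      = (S.card.choose j : ℝ) * p ^ j * (1 - p) ^ (S.card - j) := by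
  have hconst : ∀ T ∈ S.powersetCard j,
      ∏ a ∈ S, (if a ∈ T then p else 1 - p) = p ^ j * (1 - p) ^ (S.card - j) := by
    intro T hT
    rw [Finset.mem_powersetCard] at hT
    obtain ⟨hsub, hcard⟩ := hT
    rw [← Finset.prod_sdiff hsub]
    have h1 : ∏ a ∈ T, (if a ∈ T then p else 1 - p) = p ^ j := by
      rw [Finset.prod_congr rfl (fun a ha => if_pos ha), Finset.prod_const, hcard]
    have h2 : ∏ a ∈ S \ T, (if a ∈ T then p else 1 - p) = (1 - p) ^ (S.card - j) := by
      rw [Finset.prod_congr rfl (fun a ha => if_neg (Finset.mem_sdiff.mp ha).2),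
        Finset.prod_const, Finset.card_sdiff_of_subset hsub, hcard]
    rw [h1, h2]; ring
  rw [Finset.sum_congr rfl hconst, Finset.sum_const, Finset.card_powersetCard, nsmul_eq_mul]
  ring

lemma binom_sum {α : Type*} [DecidableEq α] (B S : Finset α) (hSB : S ⊆ B) (pc pd : ℝ) (x' : ℕ) :
    ∑ T ∈ B.powersetCard x',
      ∏ a ∈ B, (if a ∈ T then (if a ∈ S then pc else pd) else 1 - (if a ∈ S then pc else pd))
      = transfer pc pd S.card B.card x' := by
  have hmaps : ∀ T ∈ B.powersetCard x', (T ∩ S).card ∈ Finset.range (x' + 1) := by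
    intro T hT
    rw [Finset.mem_powersetCard] at hT
    rw [Finset.mem_range, Nat.lt_succ_iff, ← hT.2]
    exact Finset.card_le_card (Finset.inter_subset_left)
  rw [← Finset.sum_fiberwise_of_maps_to hmaps]
  unfold transfer
  refine Finset.sum_congr rfl fun j hj => ?_
  rw [Finset.mem_range, Nat.lt_succ_iff] at hj
  have key : ∑ T ∈ (B.powersetCard x').filter (fun T => (T ∩ S).card = j),
      ∏ a ∈ B, (if a ∈ T then (if a ∈ S then pc else pd) else 1 - (if a ∈ S then pc else pd))
      = ∑ P ∈ (S.powersetCard j) ×ˢ ((B \ S).powersetCard (x' - j)),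
          (∏ a ∈ S, (if a ∈ P.1 then pc else 1 - pc)) *
          (∏ a ∈ B \ S, (if a ∈ P.2 then pd else 1 - pd)) := by
    refine Finset.sum_nbij' (fun T => (T ∩ S, T \ S)) (fun P => P.1 ∪ P.2) ?_ ?_ ?_ ?_ ?_
    · intro T hT
      simp only [Finset.mem_filter, Finset.mem_powersetCard] at hT
      obtain ⟨⟨hsub, hcard⟩, hj'⟩ := hT
      simp only [Finset.mem_product, Finset.mem_powersetCard]
      refine ⟨⟨Finset.inter_subset_right, hj'⟩, Finset.sdiff_subset_sdiff hsub le_rfl, ?_⟩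
      have := Finset.card_inter_add_card_sdiff T S
      omega
    · intro P hP
      simp only [Finset.mem_product, Finset.mem_powersetCard] at hP
      obtain ⟨⟨h1s, h1c⟩, h2s, h2c⟩ := hP
      have hdisj : Disjoint P.1 P.2 := by
        refine Finset.disjoint_left.mpr fun a ha ha2 => ?_
        exact (Finset.mem_sdiff.mp (h2s ha2)).2 (h1s ha)
      simp only [Finset.mem_filter, Finset.mem_powersetCard]
      have hsub : P.1 ∪ P.2 ⊆ B :=
        Finset.union_subset (h1s.trans hSB) (h2s.trans (Finset.sdiff_subset))
      have hc : (P.1 ∪ P.2).card = x' := by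
        rw [Finset.card_union_of_disjoint hdisj, h1c, h2c]; omega
      refine ⟨⟨hsub, hc⟩, ?_⟩
      have : (P.1 ∪ P.2) ∩ S = P.1 := by
        rw [Finset.union_inter_distrib_right]
        rw [Finset.inter_eq_left.mpr h1s]
        have : P.2 ∩ S = ∅ := by
          refine Finset.eq_empty_of_forall_notMem fun a ha => ?_
          rw [Finset.mem_inter] at ha
          exact (Finset.mem_sdiff.mp (h2s ha.1)).2 ha.2
        rw [this, Finset.union_empty]
      rw [this, h1c]
    · intro T hT
      dsimp only
      rw [Finset.union_comm]
      exact Finset.sdiff_union_inter T S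
    · intro P hP
      simp only [Finset.mem_product, Finset.mem_powersetCard] at hP
      obtain ⟨⟨h1s, h1c⟩, h2s, h2c⟩ := hP
      have hP2S : P.2 ∩ S = ∅ := by
        refine Finset.eq_empty_of_forall_notMem fun a ha => ?_
        rw [Finset.mem_inter] at ha
        exact (Finset.mem_sdiff.mp (h2s ha.1)).2 ha.2
      have e1 : (P.1 ∪ P.2) ∩ S = P.1 := by
        rw [Finset.union_inter_distrib_right, Finset.inter_eq_left.mpr h1s, hP2S,
          Finset.union_empty]
      have e2 : (P.1 ∪ P.2) \ S = P.2 := by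
        rw [Finset.union_sdiff_distrib, Finset.sdiff_eq_empty_iff_subset.mpr h1s,
          Finset.empty_union, Finset.sdiff_eq_self_iff_disjoint.mpr]
        rw [Finset.disjoint_left]
        intro a ha
        exact (Finset.mem_sdiff.mp (h2s ha)).2
      rw [e1, e2]
    · intro T hT
      simp only [Finset.mem_filter, Finset.mem_powersetCard] at hT
      obtain ⟨⟨hsub, hcard⟩, hj'⟩ := hT
      rw [← Finset.prod_sdiff hSB, mul_comm]
      congr 1
      · refine Finset.prod_congr rfl fun a ha => ?_
        rw [if_pos ha]
        by_cases h : a ∈ T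
        · rw [if_pos h, if_pos (Finset.mem_inter.mpr ⟨h, ha⟩)]
        · rw [if_neg h, if_neg (fun hc => h (Finset.mem_inter.mp hc).1)]
      · refine Finset.prod_congr rfl fun a ha => ?_
        have haS : a ∉ S := (Finset.mem_sdiff.mp ha).2
        rw [if_neg haS]
        by_cases h : a ∈ T
        · rw [if_pos h, if_pos (Finset.mem_sdiff.mpr ⟨h, haS⟩)]
        · rw [if_neg h, if_neg (fun hc => h (Finset.mem_sdiff.mp hc).1)]
  rw [key, Finset.sum_product]
  dsimp only
  rw [← Finset.sum_mul_sum (f := fun T => ∏ a ∈ S, if a ∈ T then pc else 1 - pc)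
    (g := fun U => ∏ a ∈ B \ S, if a ∈ U then pd else 1 - pd), bern, bern, Finset.card_sdiff_of_subset hSB]
  ring

/-- **lumpability, `m` strategies.** From any full state of a cluster,
the total transition probability into a target cluster equals the corresponding entry
of the `m`-strategy reduced transition matrix `M''`. -/
theorem lumpability_m_strategies (n m : ℕ) (hn : 2 ≤ n) (hm : 1 ≤ m)
    (ps : Fin m → Mem1) (hps : ∀ i, (ps i).valid)
    (ks : Fin m → ℕ) (hks : ∑ i, ks i = n - 1) (i0 : Fin m)
    (focal : Fin n) (hfocal : (focal : ℕ) = 0)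
    (assign : Fin n → Fin m) (hassign : assign focal = i0)
    (hcard : ∀ i, (Finset.univ.filter fun j => j ≠ focal ∧ assign j = i).card = ks i) :
    ∀ (A : Bool) (x : (i : Fin m) → Fin (ks i + 1)),
      ∀ h ∈ clusterM focal assign ks A x,
        ∀ (A' : Bool) (x' : (i : Fin m) → Fin (ks i + 1)),
          ∑ h' ∈ clusterM focal assign ks A' x', fullM (stratM ps assign) h h'
            = redMM ps ks i0 (A, x) (A', x') := by
  classical
  intro A x h hh A' x'
  simp only [clusterM, Finset.mem_filter, Finset.mem_univ, true_and] at hh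
  obtain ⟨hfA, hxcount⟩ := hh
  set s := ∑ i, (x i : ℕ) with hs
  set B : Fin m → Finset (Fin n) :=
    fun i => Finset.univ.filter fun j => j ≠ focal ∧ assign j = i with hB
  have hBmem : ∀ j i, j ∈ B i ↔ (j ≠ focal ∧ assign j = i) := by
    intro j i; simp [hB]
  have hBcard : ∀ i, (B i).card = ks i := hcard
  set S : Fin m → Finset (Fin n) := fun i => (B i).filter (fun j => h j = true) with hSdef
  have hSsub : ∀ i, S i ⊆ B i := fun i => Finset.filter_subset _ _
  have hSmem : ∀ j i, j ∈ S i ↔ (j ≠ focal ∧ assign j = i ∧ h j = true) := by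
    intro j i
    simp only [hSdef, Finset.mem_filter, hBmem]
    tauto
  have hScard : ∀ i, (S i).card = (x i : ℕ) := by
    intro i
    rw [← hxcount i]
    congr 1
    ext j
    simp only [Finset.mem_filter, Finset.mem_univ, true_and, hSmem j i]
  -- number of cooperators in h
  have hnc : nCoop h = (if A then 1 else 0) + s := by
    have hsplit : (Finset.univ.filter fun j => h j = true)
        = (Finset.univ.filter fun j => h j = true ∧ j = focal)
          ∪ (Finset.univ.filter fun j => h j = true ∧ j ≠ focal) := by
      rw [← Finset.filter_or]
      apply Finset.filter_congr
      intro j _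
      constructor
      · intro hj; by_cases hc : j = focal <;> tauto
      · tauto
    have hdisj : Disjoint (Finset.univ.filter fun j => h j = true ∧ j = focal)
        (Finset.univ.filter fun j => h j = true ∧ j ≠ focal) := by
      rw [Finset.disjoint_left]; intro a ha hb
      simp only [Finset.mem_filter] at ha hb; exact hb.2.2 ha.2.2
    rw [nCoop, hsplit, Finset.card_union_of_disjoint hdisj]
    congr 1
    · by_cases hA : A = true
      · have : (Finset.univ.filter fun j => h j = true ∧ j = focal) = {focal} := by
          ext j
          simp only [Finset.mem_filter, Finset.mem_univ, true_and, Finset.mem_singleton]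
          constructor
          · exact fun hj => hj.2
          · rintro rfl; exact ⟨by rw [hfA, hA], rfl⟩
        simp [this, hA]
      · have hA' : A = false := by simpa using hA
        have : (Finset.univ.filter fun j => h j = true ∧ j = focal) = ∅ := by
          ext j
          simp only [Finset.mem_filter, Finset.mem_univ, true_and, Finset.notMem_empty,
            iff_false, not_and]
          rintro h1 rfl
          rw [hfA, hA'] at h1
          exact absurd h1 (by simp)
        simp [this, hA']
    · rw [Finset.card_eq_sum_card_fiberwise (f := assign) (t := Finset.univ)
        (fun j _ => Finset.mem_univ (assign j)), hs]
      refine Finset.sum_congr rfl fun i _ => ?_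
      rw [← hxcount i]
      congr 1
      ext j
      simp only [Finset.mem_filter, Finset.mem_univ, true_and]
      tauto
  have harg1 : nCoop h - (if A = true then 1 else 0) = s := by
    rw [hnc]; cases A <;> simp
  have harg2 : nCoop h - 1 = s + (if A = true then 1 else 0) - 1 := by
    rw [hnc]; cases A <;> simp [Nat.add_comm]
  have harg3 : nCoop h = s + (if A = true then 1 else 0) := by
    rw [hnc]; cases A <;> simp [Nat.add_comm]
  -- the reconstruction map from tuples of cooperator sets to full states
  set st : ((i : Fin m) → Finset (Fin n)) → FullState n :=
    fun g j => if j = focal then A' else decide (j ∈ g (assign j)) with hstdef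
  clear_value st
  have hstfocal : ∀ g, st g focal = A' := by intro g; rw [hstdef]; simp
  have hstco : ∀ g j, j ≠ focal → st g j = decide (j ∈ g (assign j)) := by
    intro g j hj; rw [hstdef]; simp [hj]
  -- left inverse
  have hleft : ∀ h' ∈ clusterM focal assign ks A' x',
      st (fun i => (B i).filter (fun j => h' j = true)) = h' := by
    intro h' hh'
    simp only [clusterM, Finset.mem_filter, Finset.mem_univ, true_and] at hh'
    funext j
    by_cases hj : j = focal
    · rw [hj]; exact (hstfocal _).trans hh'.1.symm
    · rw [hstco _ j hj]
      have hjB : j ∈ B (assign j) := (hBmem j (assign j)).mpr ⟨hj, rfl⟩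
      cases hjc : h' j
      · simp [Finset.mem_filter, hjc]
      · simp [Finset.mem_filter, hjB, hjc]
  have hkey : ∑ h' ∈ clusterM focal assign ks A' x', fullM (stratM ps assign) h h'
      = ∑ g ∈ Fintype.piFinset (fun i => (B i).powersetCard ((x' i : ℕ))),
          fullM (stratM ps assign) h (st g) := by
    refine Finset.sum_nbij' (fun h' i => (B i).filter (fun j => h' j = true)) st
      ?_ ?_ hleft ?_ ?_
    · intro h' hh'
      simp only [clusterM, Finset.mem_filter, Finset.mem_univ, true_and] at hh'
      rw [Fintype.mem_piFinset]
      intro i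
      rw [Finset.mem_powersetCard]
      refine ⟨Finset.filter_subset _ _, ?_⟩
      rw [← hh'.2 i]
      congr 1
      ext j
      simp only [Finset.mem_filter, Finset.mem_univ, true_and, hBmem j i]
      tauto
    · intro g hg
      rw [Fintype.mem_piFinset] at hg
      simp only [clusterM, Finset.mem_filter, Finset.mem_univ, true_and]
      refine ⟨hstfocal g, fun i => ?_⟩
      have hset : (Finset.univ.filter fun j => j ≠ focal ∧ assign j = i ∧ st g j = true)
          = g i := by
        ext j
        simp only [Finset.mem_filter, Finset.mem_univ, true_and]
        constructor
        · rintro ⟨hj1, hj2, hj3⟩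
          rw [hstco g j hj1, hj2] at hj3
          exact of_decide_eq_true hj3
        · intro hj
          have hjB : j ∈ B i := (Finset.mem_powersetCard.mp (hg i)).1 hj
          obtain ⟨hj1, hj2⟩ := (hBmem j i).mp hjB
          refine ⟨hj1, hj2, ?_⟩
          rw [hstco g j hj1, hj2]
          exact decide_eq_true hj
      rw [hset]
      exact (Finset.mem_powersetCard.mp (hg i)).2
    · intro g hg
      rw [Fintype.mem_piFinset] at hg
      funext i
      ext j
      simp only [Finset.mem_filter]
      constructor
      · rintro ⟨hjB, hjc⟩
        obtain ⟨hj1, hj2⟩ := (hBmem j i).mp hjB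
        rw [hstco g j hj1, hj2] at hjc
        exact of_decide_eq_true hjc
      · intro hj
        have hjB : j ∈ B i := (Finset.mem_powersetCard.mp (hg i)).1 hj
        obtain ⟨hj1, hj2⟩ := (hBmem j i).mp hjB
        refine ⟨hjB, ?_⟩
        rw [hstco g j hj1, hj2]
        exact decide_eq_true hj
    · intro h' hh'
      exact congrArg _ (hleft h' hh').symm
  -- value of the full transition probability for a reconstructed state
  have hval : ∀ g ∈ Fintype.piFinset (fun i => (B i).powersetCard ((x' i : ℕ))),
      fullM (stratM ps assign) h (st g)
        = |1 - (if A' then (1:ℝ) else 0) - (ps i0).cond A s| *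
          ∏ i, ∏ j ∈ B i,
            (if j ∈ g i
             then (if j ∈ S i
                   then (ps i).cond true (s + (if A then 1 else 0) - 1)
                   else (ps i).cond false (s + (if A then 1 else 0)))
             else 1 - (if j ∈ S i
                   then (ps i).cond true (s + (if A then 1 else 0) - 1)
                   else (ps i).cond false (s + (if A then 1 else 0)))) := by
    intro g hg
    rw [fullM]
    simp only [Matrix.of_apply]
    rw [← Finset.mul_prod_erase Finset.univ _ (Finset.mem_univ focal)]
    congr 1
    · -- focal factor
      rw [hstfocal, hfA, harg1]
      simp only [stratM, hassign]
      have hc := (hps i0).2 A s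
      simp only [Set.mem_Icc] at hc
      cases A'
      · have e : (1:ℝ) - (if (false:Bool) then (1:ℝ) else 0) - (ps i0).cond A s
            = 1 - (ps i0).cond A s := by norm_num
        rw [e, abs_of_nonneg (by linarith [hc.2])]
        simp
      · have e : (1:ℝ) - (if (true:Bool) then (1:ℝ) else 0) - (ps i0).cond A s
            = -((ps i0).cond A s) := by norm_num
        rw [e, abs_neg, abs_of_nonneg hc.1]
        simp
    · -- co-player factors
      rw [← Finset.prod_fiberwise_of_maps_to (g := assign) (t := Finset.univ)
        (fun j _ => Finset.mem_univ (assign j))]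
      refine Finset.prod_congr rfl fun i _ => ?_
      have hfib : (Finset.univ.erase focal).filter (fun j => assign j = i) = B i := by
        ext j
        simp only [Finset.mem_filter, Finset.mem_erase, Finset.mem_univ, true_and, hBmem j i,
          and_true]
      rw [hfib]
      refine Finset.prod_congr rfl fun j hj => ?_
      obtain ⟨hj1, hj2⟩ := (hBmem j i).mp hj
      rw [hstco g j hj1, hj2]
      simp only [stratM, hj2]
      have hq : (ps i).cond (h j) (nCoop h - if h j then 1 else 0)
          = (if j ∈ S i
             then (ps i).cond true (s + (if A then 1 else 0) - 1)
             else (ps i).cond false (s + (if A then 1 else 0))) := by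
        cases hjc : h j
        · have hjS : j ∉ S i := by
            rw [hSmem]
            rintro ⟨-, -, hcon⟩
            rw [hjc] at hcon
            exact absurd hcon (by simp)
          rw [if_neg hjS]
          simp only [Bool.false_eq_true, if_false, Nat.sub_zero, harg3]
        · have hjS : j ∈ S i := (hSmem j i).mpr ⟨hj1, hj2, hjc⟩
          rw [if_pos hjS]
          simp only [if_true, harg2]
      rw [hq]
      by_cases hjg : j ∈ g i
      · rw [if_pos hjg, if_pos (by simpa using (decide_eq_true hjg))]
      · rw [if_neg hjg, if_neg (by simpa using hjg)]
  rw [hkey, Finset.sum_congr rfl hval, ← Finset.mul_sum]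
  have hfac : ∏ i, ∑ T ∈ (B i).powersetCard ((x' i : ℕ)),
        (∏ j ∈ B i,
          (if j ∈ T
           then (if j ∈ S i
                 then (ps i).cond true (s + (if A then 1 else 0) - 1)
                 else (ps i).cond false (s + (if A then 1 else 0)))
           else 1 - (if j ∈ S i
                 then (ps i).cond true (s + (if A then 1 else 0) - 1)
                 else (ps i).cond false (s + (if A then 1 else 0)))))
      = ∑ g ∈ Fintype.piFinset (fun i => (B i).powersetCard ((x' i : ℕ))),
          ∏ i, ∏ j ∈ B i,
            (if j ∈ g i
             then (if j ∈ S i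
                   then (ps i).cond true (s + (if A then 1 else 0) - 1)
                   else (ps i).cond false (s + (if A then 1 else 0)))
             else 1 - (if j ∈ S i
                   then (ps i).cond true (s + (if A then 1 else 0) - 1)
                   else (ps i).cond false (s + (if A then 1 else 0)))) :=
    Finset.prod_univ_sum _ _
  rw [← hfac]
  have hred : redMM ps ks i0 (A, x) (A', x')
      = |1 - (if A' then (1:ℝ) else 0) - (ps i0).cond A (∑ i, (x i : ℕ))| *
        ∏ i, transfer ((ps i).cond true ((∑ i', (x i' : ℕ)) + (if A then 1 else 0) - 1))
                      ((ps i).cond false ((∑ i', (x i' : ℕ)) + (if A then 1 else 0)))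
                      (x i : ℕ) (ks i) (x' i : ℕ) := rfl
  rw [hred, ← hs]
  congr 1
  refine Finset.prod_congr rfl fun i _ => ?_
  rw [binom_sum (B i) (S i) (hSsub i), hScard, hBcard]
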